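/- Let α ∈ E_ℚ be a nonzero power sum. Then there exist positive constants C₁, C₂ and a natural number N such that for all n ≥ N one has C₁·ℓ(α)ⁿ ≤ |α(n)| ≤ C₂·ℓ(α)ⁿ. In particular, α(n) ≠ 0 for all sufficiently large n. -/

import Mathlib

open scoped BigOperators

/-- `α` belongs to `E_ℚ`: it is a power sum `n ↦ ∑ cᵢ aᵢⁿ` with nonzero rational
coefficients `cᵢ` and distinct positive *rational* roots `aᵢ` (the zero function,
given by the empty sum, is allowed). -/
def IsPowerSumQ (α : ℕ → ℚ) : Prop :=
  ∃ (s : Finset ℚ) (c : ℚ → ℚ),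
    (∀ a ∈ s, c a ≠ 0) ∧ (∀ a ∈ s, 0 < a) ∧
    ∀ n : ℕ, α n = ∑ a ∈ s, c a * a ^ n

/-- `α` belongs to `E`: it is a power sum `n ↦ ∑ cᵢ aᵢⁿ` with nonzero rational
coefficients `cᵢ` and distinct positive *integer* roots `aᵢ` (the zero function,
given by the empty sum, is allowed). -/
def IsPowerSumE (α : ℕ → ℚ) : Prop :=
  ∃ (s : Finset ℚ) (c : ℚ → ℚ),
    (∀ a ∈ s, c a ≠ 0) ∧ (∀ a ∈ s, ∃ m : ℕ, 0 < m ∧ (m : ℚ) = a) ∧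
    ∀ n : ℕ, α n = ∑ a ∈ s, c a * a ^ n

/-- `HasEll α l` : `α` is a power sum in `E_ℚ` (nonzero rational coefficients,
distinct positive rational roots) and `l = ℓ(α)` is the maximal root in its
normalized representation; for `α = 0` (empty representation) this gives `l = 0`. -/
def HasEll (α : ℕ → ℚ) (l : ℚ) : Prop :=
  ∃ (s : Finset ℚ) (c : ℚ → ℚ),
    (∀ a ∈ s, c a ≠ 0) ∧ (∀ a ∈ s, 0 < a) ∧
    (∀ n : ℕ, α n = ∑ a ∈ s, c a * a ^ n) ∧
    l = WithBot.unbotD 0 s.max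

/-- Value of the finite continued fraction `[u₀; u₁, …, u_R] = u₀ + 1/(u₁ + 1/(⋯ + 1/u_R))`. -/
def cfEval : List ℚ → ℚ
  | [] => 0
  | [a] => a
  | a :: b :: l => a + (cfEval (b :: l))⁻¹

/-- All the "tails" `[uᵢ; …, u_R]` (for `i ≥ 1`) of the continued fraction
`[u₀; u₁, …, u_R]` have nonzero value, i.e. no division by zero occurs when
evaluating the continued fraction. -/
def CFTailsNonzero : List ℚ → Prop
  | [] => True
  | [_] => True
  | _ :: b :: l => cfEval (b :: l) ≠ 0 ∧ CFTailsNonzero (b :: l)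

/-- `u` is the canonical continued fraction expansion of the rational `x`:
`x = [u₀; u₁, …, u_R]` with the `uᵢ` integers, `uᵢ ≥ 1` for `i ≥ 1`, and
`u_R ≥ 2` if `R ≥ 1`. -/
def IsCanonCF (x : ℚ) (u : List ℤ) : Prop :=
  u ≠ [] ∧ (∀ a ∈ u.tail, 1 ≤ a) ∧ (2 ≤ u.length → 2 ≤ u.getLastD 0) ∧
    cfEval (u.map fun a => (a : ℚ)) = x

/-- The canonical continued fraction expansion of the rational `x` has `m`
partial quotients (so `x = [u₀; u₁, …, u_R]` with `m = R + 1`). -/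
def HasCFLength (x : ℚ) (m : ℕ) : Prop :=
  ∃ u : List ℤ, IsCanonCF x u ∧ u.length = m
/-- Let `α ∈ E_ℚ` be nonzero. Then `ℓ(α)ⁿ ≫ |α(n)| ≫ ℓ(α)ⁿ` as `n → ∞`;
in particular `α(n) ≠ 0` for all sufficiently large `n`. -/
theorem power_sum_growth
    (α : ℕ → ℚ) (l : ℚ) (hα0 : α ≠ 0) (hl : HasEll α l) :
    ∃ (C₁ C₂ : ℝ) (N : ℕ), 0 < C₁ ∧ 0 < C₂ ∧
      ∀ n : ℕ, N ≤ n →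
        C₁ * (l : ℝ) ^ n ≤ |((α n : ℚ) : ℝ)| ∧
        |((α n : ℚ) : ℝ)| ≤ C₂ * (l : ℝ) ^ n ∧
        α n ≠ 0 := by
  obtain ⟨s, c, hc, hpos, hα, hle⟩ := hl
  have hsne : s.Nonempty := by
    rcases s.eq_empty_or_nonempty with h | h
    · exact absurd (funext fun n => by simp [hα n, h]) hα0
    · exact h
  obtain ⟨m, hm⟩ := s.max_of_nonempty hsne
  have hlm : l = m := by rw [hle, hm]; rfl
  have hlmem : l ∈ s := hlm ▸ Finset.mem_of_max hm
  have hlpos : 0 < l := hpos l hlmem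
  have hlR : (0:ℝ) < (l:ℝ) := by exact_mod_cast hlpos
  have hmax : ∀ a ∈ s, a ≤ l := by
    intro a ha
    have h1 := Finset.le_max ha
    rw [hm] at h1
    rw [hlm]
    exact_mod_cast h1
  set g : ℕ → ℝ := fun n => ∑ a ∈ s, (c a : ℝ) * ((a:ℝ)/(l:ℝ))^n with hg
  have htend : Filter.Tendsto g Filter.atTop (nhds ((c l : ℝ))) := by
    have heq : (c l : ℝ) = ∑ a ∈ s, (if a = l then (c l : ℝ) else 0) := by
      simp [Finset.sum_ite_eq' s l (fun _ => (c l:ℝ)), hlmem]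
    rw [heq]
    apply tendsto_finset_sum
    intro a ha
    by_cases h : a = l
    · subst h
      simp only [if_pos rfl]
      have hone : ∀ n : ℕ, (c a : ℝ) * ((a:ℝ)/(a:ℝ))^n = (c a : ℝ) := by
        intro n; rw [div_self (ne_of_gt hlR), one_pow, mul_one]
      simpa [hone] using (tendsto_const_nhds : Filter.Tendsto (fun _ : ℕ => (c a : ℝ)) Filter.atTop _)
    · simp only [if_neg h]
      have haR : (0:ℝ) < (a:ℝ) := by exact_mod_cast hpos a ha
      have h1 : |((a:ℝ)/(l:ℝ))| < 1 := by
        rw [abs_of_nonneg (div_nonneg haR.le hlR.le), div_lt_one hlR]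
        exact_mod_cast lt_of_le_of_ne (hmax a ha) h
      have h2 := tendsto_pow_atTop_nhds_zero_of_abs_lt_one h1
      simpa using h2.const_mul (c a : ℝ)
  have hcl : (0:ℝ) < |(c l : ℝ)| := abs_pos.mpr (by exact_mod_cast hc l hlmem)
  obtain ⟨N, hN⟩ := Metric.tendsto_atTop.mp htend (|(c l:ℝ)|/2) (half_pos hcl)
  have hkey : ∀ n, ((α n : ℚ) : ℝ) = g n * (l:ℝ)^n := by
    intro n
    rw [hα n]
    push_cast
    rw [hg, Finset.sum_mul]
    apply Finset.sum_congr rfl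
    intro a ha
    rw [mul_assoc, ← mul_pow, div_mul_cancel₀ _ (ne_of_gt hlR)]
  refine ⟨|(c l:ℝ)|/2, |(c l:ℝ)|/2 + |(c l:ℝ)|, N, half_pos hcl, by positivity, ?_⟩
  intro n hn
  have hd := hN n hn
  rw [Real.dist_eq] at hd
  have hpow : (0:ℝ) < (l:ℝ)^n := pow_pos hlR n
  have h1 : |(c l:ℝ)|/2 ≤ |g n| := by
    have h := abs_sub_abs_le_abs_sub (c l:ℝ) (g n)
    rw [abs_sub_comm] at h
    linarith
  have h2 : |g n| ≤ |(c l:ℝ)|/2 + |(c l:ℝ)| := by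
    have h := abs_sub_abs_le_abs_sub (g n) (c l:ℝ)
    linarith
  have habs : |((α n:ℚ):ℝ)| = |g n| * (l:ℝ)^n := by
    rw [hkey n, abs_mul, abs_of_pos hpow]
  refine ⟨?_, ?_, ?_⟩
  · rw [habs]; exact mul_le_mul_of_nonneg_right h1 hpow.le
  · rw [habs]; exact mul_le_mul_of_nonneg_right h2 hpow.le
  · intro h0
    rw [h0] at habs
    simp only [Rat.cast_zero, abs_zero] at habs
    nlinarith
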